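/- Let A and B be finite types and let φ₀, φ₁ : A × B → ℂ be unit vectors. If there is NO unitary matrix S ∈ Matrix.unitaryGroup A ℂ with (S ⊗ I).mulVec φ₀ = φ₁, then the fidelity of the reduced states satisfies F(ptrA φ₀, ptrA φ₁) ≠ 1. (A perfectly binding static quantum bit commitment is therefore not perfectly concealing.) -/

import Mathlib

open scoped ComplexOrder
open Matrix

noncomputable section

/-- Partial trace over `A` of the outer product `|ψ⟩⟨ψ|`:
`(ptrA ψ) j q = ∑ i, ψ (i, j) * conj (ψ (i, q))`. -/
def ptrA {A B : Type*} [Fintype A] (ψ : A × B → ℂ) : Matrix B B ℂ :=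
  fun j q => ∑ i : A, ψ (i, j) * (starRingEnd ℂ) (ψ (i, q))

/-- The Kronecker product `S ⊗ I` with the identity on `B`, as a matrix on `A × B`. -/
def kronId {A B : Type*} [DecidableEq B] (S : Matrix A A ℂ) : Matrix (A × B) (A × B) ℂ :=
  Matrix.kroneckerMap (· * ·) S (1 : Matrix B B ℂ)

/-- `ptrA ψ` is a Gram matrix, hence positive semidefinite. -/
lemma ptrA_posSemidef {A B : Type*} [Fintype A] [Fintype B] (ψ : A × B → ℂ) :
    (ptrA ψ).PosSemidef := by
  set V : Matrix A B ℂ := Matrix.of fun i j => (starRingEnd ℂ) (ψ (i, j)) with hV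
  have h := Matrix.posSemidef_conjTranspose_mul_self V
  have heq : ptrA ψ = Vᴴ * V := by
    ext j q
    simp [Matrix.mul_apply, Matrix.conjTranspose_apply, ptrA, hV, mul_comm]
  rw [heq]; exact h

namespace Matrix.PosSemidef

/-- The positive semidefinite square root of a positive semidefinite matrix
(the definition of the older Mathlib, where it has since been removed). -/
def sqrt {n 𝕜 : Type*} [Fintype n] [RCLike 𝕜] [DecidableEq n] {A : Matrix n n 𝕜}
    (hA : A.PosSemidef) : Matrix n n 𝕜 :=
  hA.1.eigenvectorUnitary.1 * diagonal ((↑) ∘ (√·) ∘ hA.1.eigenvalues) *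
  (star hA.1.eigenvectorUnitary : Matrix n n 𝕜)

lemma posSemidef_sqrt {n 𝕜 : Type*} [Fintype n] [RCLike 𝕜] [DecidableEq n] {A : Matrix n n 𝕜}
    (hA : A.PosSemidef) : hA.sqrt.PosSemidef := by
  have hd : (diagonal ((↑) ∘ (√·) ∘ hA.1.eigenvalues) : Matrix n n 𝕜).PosSemidef := by
    rw [posSemidef_diagonal_iff]
    intro i
    exact RCLike.ofReal_nonneg.mpr (Real.sqrt_nonneg _)
  exact hd.mul_mul_conjTranspose_same _

end Matrix.PosSemidef

lemma Matrix.PosSemidef.sqrt_mul_self {n 𝕜 : Type*} [Fintype n] [RCLike 𝕜] [DecidableEq n]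
    {A : Matrix n n 𝕜} (hA : A.PosSemidef) : hA.sqrt * hA.sqrt = A := by
  conv_rhs => rw [hA.1.spectral_theorem, Unitary.conjStarAlgAut_apply]
  unfold Matrix.PosSemidef.sqrt
  set U := hA.1.eigenvectorUnitary
  have hU : (star U : Matrix n n 𝕜) * (U : Matrix n n 𝕜) = 1 := by simp
  have hD : (diagonal ((↑) ∘ (√·) ∘ hA.1.eigenvalues) : Matrix n n 𝕜) *
      diagonal ((↑) ∘ (√·) ∘ hA.1.eigenvalues) =
      (diagonal (RCLike.ofReal ∘ hA.1.eigenvalues) : Matrix n n 𝕜) := by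
    rw [diagonal_mul_diagonal]; congr 1; funext i
    simp only [Function.comp]
    rw [← RCLike.ofReal_mul, Real.mul_self_sqrt (hA.eigenvalues_nonneg i)]
  calc (U : Matrix n n 𝕜) * diagonal ((↑) ∘ (√·) ∘ hA.1.eigenvalues) * (star U : Matrix n n 𝕜) *
        ((U : Matrix n n 𝕜) * diagonal ((↑) ∘ (√·) ∘ hA.1.eigenvalues) * (star U : Matrix n n 𝕜))
      = (U : Matrix n n 𝕜) * diagonal ((↑) ∘ (√·) ∘ hA.1.eigenvalues) *
        ((star U : Matrix n n 𝕜) * (U : Matrix n n 𝕜)) *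
        diagonal ((↑) ∘ (√·) ∘ hA.1.eigenvalues) * (star U : Matrix n n 𝕜) := by
          simp only [mul_assoc]
    _ = (U : Matrix n n 𝕜) * ((diagonal ((↑) ∘ (√·) ∘ hA.1.eigenvalues) : Matrix n n 𝕜) *
        diagonal ((↑) ∘ (√·) ∘ hA.1.eigenvalues)) * (star U : Matrix n n 𝕜) := by
          rw [hU]; simp only [mul_one, mul_assoc]
    _ = _ := by rw [hD]

lemma sqrt_mul_mul_sqrt_posSemidef {B : Type*} [Fintype B] [DecidableEq B]
    {ρ σ : Matrix B B ℂ} (hρ : ρ.PosSemidef) (hσ : σ.PosSemidef) :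
    (hρ.sqrt * σ * hρ.sqrt).PosSemidef := by
  have h := hσ.mul_mul_conjTranspose_same hρ.sqrt
  rwa [hρ.posSemidef_sqrt.isHermitian.eq] at h

/-- The fidelity `F(ρ, σ) = tr √(√ρ * σ * √ρ)` of two positive semidefinite matrices. -/
def fidelity {B : Type*} [Fintype B] [DecidableEq B] {ρ σ : Matrix B B ℂ}
    (hρ : ρ.PosSemidef) (hσ : σ.PosSemidef) : ℝ :=
  ((sqrt_mul_mul_sqrt_posSemidef hρ hσ).sqrt.trace).re


-- ===== auxiliary lemmas =====

/-- If `Aᴴ A = Bᴴ B` then `B = U A` for some unitary `U`. -/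
lemma exists_unitary_mul_eq {m n : Type*} [Fintype m] [Fintype n] [DecidableEq m] [DecidableEq n]
    (A B : Matrix m n ℂ) (h : Aᴴ * A = Bᴴ * B) :
    ∃ U ∈ Matrix.unitaryGroup m ℂ, U * A = B := by
  classical
  let TA := Matrix.toEuclideanLin A
  let TB := Matrix.toEuclideanLin B
  have key : ∀ (M : Matrix m n ℂ) (x y : EuclideanSpace ℂ n),
      inner ℂ (Matrix.toEuclideanLin M x) (Matrix.toEuclideanLin M y) =
        (inner ℂ x (Matrix.toEuclideanLin (Mᴴ * M) y) : ℂ) := by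
    intro M x y
    have h1 : Matrix.toEuclideanLin (Mᴴ * M) y
        = Matrix.toEuclideanLin Mᴴ (Matrix.toEuclideanLin M y) := by
      simp [Matrix.toEuclideanLin_apply, Matrix.mulVec_mulVec]
    rw [h1, Matrix.toEuclideanLin_conjTranspose_eq_adjoint, LinearMap.adjoint_inner_right]
  have hinner : ∀ x y, (inner ℂ (TA x) (TA y) : ℂ) = inner ℂ (TB x) (TB y) := by
    intro x y; rw [key A, key B, h]
  have hnorm : ∀ x, ‖TA x‖ = ‖TB x‖ := by
    intro x
    rw [@norm_eq_sqrt_re_inner ℂ, @norm_eq_sqrt_re_inner ℂ, hinner]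
  have hker : LinearMap.ker TA ≤ LinearMap.ker TB := by
    intro x hx
    rw [LinearMap.mem_ker] at hx ⊢
    have := hnorm x
    rw [hx, norm_zero] at this
    exact norm_eq_zero.mp this.symm
  -- the isometry from range TA
  let g : LinearMap.range TA →ₗ[ℂ] EuclideanSpace ℂ m :=
    (Submodule.liftQ (LinearMap.ker TA) TB hker).comp
      (LinearMap.quotKerEquivRange TA).symm.toLinearMap
  have hg : ∀ x : EuclideanSpace ℂ n, ∀ hx, g ⟨TA x, hx⟩ = TB x := by
    intro x hx
    have h2 : (LinearMap.quotKerEquivRange TA).symm ⟨TA x, hx⟩ =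
        Submodule.Quotient.mk x := by
      have := LinearMap.quotKerEquivRange_symm_apply_image TA x ⟨x, rfl⟩
      simpa using this
    simp only [g, LinearMap.comp_apply, LinearEquiv.coe_toLinearMap, h2]
    rfl
  have hgiso : ∀ v : LinearMap.range TA, ‖g v‖ = ‖v‖ := by
    rintro ⟨v, hv⟩
    obtain ⟨x, rfl⟩ := hv
    rw [hg x ⟨x, rfl⟩]
    simpa using (hnorm x).symm
  let gI : LinearMap.range TA →ₗᵢ[ℂ] EuclideanSpace ℂ m := ⟨g, hgiso⟩
  let f : EuclideanSpace ℂ m →ₗᵢ[ℂ] EuclideanSpace ℂ m := gI.extend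
  have hf : ∀ x, f (TA x) = TB x := by
    intro x
    have : f ((⟨TA x, ⟨x, rfl⟩⟩ : LinearMap.range TA) : EuclideanSpace ℂ m)
        = gI ⟨TA x, ⟨x, rfl⟩⟩ := LinearIsometry.extend_apply gI _
    simpa [gI, hg x ⟨x, rfl⟩] using this
  -- the matrix of f
  let e : m → EuclideanSpace ℂ m := fun i => EuclideanSpace.single i 1
  let U : Matrix m m ℂ := Matrix.of fun i j => f (e j) i
  have hUe : ∀ j, Matrix.toEuclideanLin U (e j) = f (e j) := by
    intro j
    rw [Matrix.toEuclideanLin_apply]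
    ext i
    have : WithLp.ofLp (e j) = Pi.single j 1 := rfl
    rw [this, Matrix.mulVec_single]
    simp [U]
  have hU : ∀ x, Matrix.toEuclideanLin U x = f x := by
    intro x
    have hx : x = ∑ j, x j • e j := by
      have := (EuclideanSpace.basisFun m ℂ).sum_repr x
      simp only [EuclideanSpace.basisFun_apply, EuclideanSpace.basisFun_repr] at this
      exact this.symm
    rw [hx, map_sum, map_sum]
    exact Finset.sum_congr rfl fun j _ => by
      rw [_root_.map_smul, LinearIsometry.map_smul, hUe j]
  refine ⟨U, ?_, ?_⟩
  · rw [Matrix.mem_unitaryGroup_iff']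
    ext i j
    have h3 : (inner ℂ (f (e i)) (f (e j)) : ℂ) = inner ℂ (e i) (e j) :=
      f.inner_map_map _ _
    have lhs : (star U * U) i j = inner ℂ (f (e i)) (f (e j)) := by
      rw [Matrix.mul_apply]
      simp only [Matrix.star_apply, Matrix.conjTranspose_apply]
      rw [PiLp.inner_apply]
      simp [U, RCLike.inner_apply, Matrix.star_apply]
      exact Finset.sum_congr rfl fun _ _ => mul_comm _ _
    rw [lhs, h3]
    simp [e, EuclideanSpace.inner_single_left, EuclideanSpace.single_apply, Matrix.one_apply,
      eq_comm]
  · apply Matrix.toEuclideanLin.injective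
    apply LinearMap.ext
    intro x
    have h1 : Matrix.toEuclideanLin (U * A) x = Matrix.toEuclideanLin U (TA x) := by
      simp [Matrix.toEuclideanLin_apply, Matrix.mulVec_mulVec, TA]
    rw [h1, hU, hf]

lemma trace_ptrA_eq_one {A B : Type*} [Fintype A] [Fintype B] (ψ : A × B → ℂ)
    (h : ∑ k : A × B, (starRingEnd ℂ) (ψ k) * ψ k = 1) :
    (ptrA ψ).trace = 1 := by
  rw [← h, Fintype.sum_prod_type]
  simp only [Matrix.trace, Matrix.diag_apply, ptrA]
  rw [Finset.sum_comm]
  exact Finset.sum_congr rfl fun i _ => Finset.sum_congr rfl fun j _ => (mul_comm _ _)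

/-- A perfectly binding static QBC is not perfectly concealing: if no local unitary on `A`
maps `φ₀` to `φ₁`, then the fidelity of the reduced states is not `1`. -/
theorem binding_implies_not_concealing_static
    {A B : Type*} [Fintype A] [Fintype B] [DecidableEq A] [DecidableEq B]
    (φ₀ φ₁ : A × B → ℂ)
    (h₀ : ∑ k : A × B, (starRingEnd ℂ) (φ₀ k) * φ₀ k = 1)
    (h₁ : ∑ k : A × B, (starRingEnd ℂ) (φ₁ k) * φ₁ k = 1)
    (hbinding : ¬ ∃ S ∈ Matrix.unitaryGroup A ℂ, (kronId S).mulVec φ₀ = φ₁) :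
    fidelity (ptrA_posSemidef φ₀) (ptrA_posSemidef φ₁) ≠ 1 := by
  intro hF
  apply hbinding
  have hρ := ptrA_posSemidef φ₀
  have hσ := ptrA_posSemidef φ₁
  set ρ := ptrA φ₀ with hρdef
  set σ := ptrA φ₁ with hσdef
  have htrρ : ρ.trace = 1 := trace_ptrA_eq_one φ₀ h₀
  have htrσ : σ.trace = 1 := trace_ptrA_eq_one φ₁ h₁
  set P := (sqrt_mul_mul_sqrt_posSemidef hρ hσ).sqrt with hPdef
  have hPpsd : P.PosSemidef := (sqrt_mul_mul_sqrt_posSemidef hρ hσ).posSemidef_sqrt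
  -- the trace of P is 1 (as a complex number)
  have hPtr : P.trace = 1 := by
    have hre : P.trace.re = 1 := hF
    have hherm : Pᴴ = P := hPpsd.isHermitian.eq
    have him : P.trace.im = 0 := by
      have h9 : Pᴴ.trace = P.trace := by rw [hherm]
      rw [Matrix.trace_conjTranspose] at h9
      exact Complex.conj_eq_iff_im.mp h9
    exact Complex.ext hre (by simp [him])
  -- the polar decomposition of N = √σ √ρ
  set N := hσ.sqrt * hρ.sqrt with hNdef
  have hNsq : Nᴴ * N = hρ.sqrt * σ * hρ.sqrt := by
    rw [hNdef, Matrix.conjTranspose_mul, hρ.posSemidef_sqrt.isHermitian.eq,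
      hσ.posSemidef_sqrt.isHermitian.eq]
    rw [mul_assoc, ← mul_assoc hσ.sqrt, hσ.sqrt_mul_self, ← mul_assoc, mul_assoc]
  have hPP : Pᴴ * P = Nᴴ * N := by
    rw [hPpsd.isHermitian.eq, hPdef, (sqrt_mul_mul_sqrt_posSemidef hρ hσ).sqrt_mul_self, hNsq]
  obtain ⟨W, hW, hWP⟩ := exists_unitary_mul_eq P N hPP
  have hWsW : Wᴴ * W = 1 := Matrix.mem_unitaryGroup_iff'.mp hW
  have hWW' : W * Wᴴ = 1 := Matrix.mem_unitaryGroup_iff.mp hW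
  have hWN : Wᴴ * N = P := by
    rw [← hWP, ← mul_assoc, hWsW, one_mul]
  -- trace identity
  have htr1 : ((hσ.sqrt * W)ᴴ * hρ.sqrt).trace = 1 := by
    rw [Matrix.conjTranspose_mul, hσ.posSemidef_sqrt.isHermitian.eq, mul_assoc, ← hNdef, hWN,
      hPtr]
  -- Cauchy–Schwarz equality via Euclidean vectors
  let vecM : Matrix B B ℂ → EuclideanSpace ℂ (B × B) := fun X =>
    (WithLp.equiv 2 ((B × B) → ℂ)).symm fun p => X p.1 p.2
  have hinner_tr : ∀ X Y : Matrix B B ℂ, (inner ℂ (vecM X) (vecM Y) : ℂ) = (Xᴴ * Y).trace := by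
    intro X Y
    rw [PiLp.inner_apply]
    simp only [RCLike.inner_apply, vecM, WithLp.equiv_symm_apply, WithLp.ofLp_toLp, Matrix.trace,
      Matrix.diag_apply, Matrix.mul_apply, Matrix.conjTranspose_apply]
    rw [Fintype.sum_prod_type]
    rw [Finset.sum_comm]
    exact Finset.sum_congr rfl fun _ _ => Finset.sum_congr rfl fun _ _ => mul_comm _ _
  have norm_one_of : ∀ X : Matrix B B ℂ, (Xᴴ * X).trace = 1 → ‖vecM X‖ = 1 := by
    intro X hX
    have h2 : (inner ℂ (vecM X) (vecM X) : ℂ) = 1 := by rw [hinner_tr, hX]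
    rw [@norm_eq_sqrt_re_inner ℂ, h2]
    simp
  have hx : ‖vecM (hσ.sqrt * W)‖ = 1 := by
    apply norm_one_of
    rw [Matrix.conjTranspose_mul, hσ.posSemidef_sqrt.isHermitian.eq, mul_assoc,
      ← mul_assoc hσ.sqrt, hσ.sqrt_mul_self]
    rw [← mul_assoc, Matrix.trace_mul_comm, ← mul_assoc, hWW', one_mul, htrσ]
  have hy : ‖vecM hρ.sqrt‖ = 1 := by
    apply norm_one_of
    rw [hρ.posSemidef_sqrt.isHermitian.eq, hρ.sqrt_mul_self, htrρ]
  have hxy : (inner ℂ (vecM (hσ.sqrt * W)) (vecM hρ.sqrt) : ℂ) = 1 := by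
    rw [hinner_tr, htr1]
  have heqvec : vecM (hσ.sqrt * W) = vecM hρ.sqrt :=
    (inner_eq_one_iff_of_norm_eq_one hx hy).mp hxy
  have heq : hσ.sqrt * W = hρ.sqrt := by
    ext i j
    have := congrFun (congrArg (WithLp.equiv 2 ((B × B) → ℂ)) heqvec) (i, j)
    simpa [vecM] using this
  -- hence ρ = σ
  have hρσ : ρ = σ := by
    have h4 : (hρ.sqrt)ᴴ = Wᴴ * hσ.sqrt := by
      rw [← heq, Matrix.conjTranspose_mul, hσ.posSemidef_sqrt.isHermitian.eq]
    calc ρ = hρ.sqrt * hρ.sqrt := hρ.sqrt_mul_self.symm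
    _ = hρ.sqrt * (hρ.sqrt)ᴴ := by rw [hρ.posSemidef_sqrt.isHermitian.eq]
    _ = (hσ.sqrt * W) * (Wᴴ * hσ.sqrt) := by rw [h4, heq]
    _ = hσ.sqrt * (W * Wᴴ) * hσ.sqrt := by rw [mul_assoc, mul_assoc, mul_assoc]
    _ = σ := by rw [hWW', mul_one, hσ.sqrt_mul_self]
  -- second application: relate the purifications
  set V₀ : Matrix A B ℂ := Matrix.of fun i j => (starRingEnd ℂ) (φ₀ (i, j)) with hV₀
  set V₁ : Matrix A B ℂ := Matrix.of fun i j => (starRingEnd ℂ) (φ₁ (i, j)) with hV₁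
  have hVptr : ∀ (ψ : A × B → ℂ),
      (Matrix.of fun i j => (starRingEnd ℂ) (ψ (i, j)) : Matrix A B ℂ)ᴴ *
        (Matrix.of fun i j => (starRingEnd ℂ) (ψ (i, j))) = ptrA ψ := by
    intro ψ
    ext j q
    simp [Matrix.mul_apply, Matrix.conjTranspose_apply, ptrA, mul_comm]
  have hVV : V₀ᴴ * V₀ = V₁ᴴ * V₁ := by
    rw [hV₀, hV₁, hVptr, hVptr, ← hρdef, ← hσdef, hρσ]
  obtain ⟨T, hT, hTV⟩ := exists_unitary_mul_eq V₀ V₁ hVV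
  -- the unitary on A
  refine ⟨T.map (starRingEnd ℂ), ?_, ?_⟩
  · rw [Matrix.mem_unitaryGroup_iff']
    have hT' : star T * T = 1 := Matrix.mem_unitaryGroup_iff'.mp hT
    ext i j
    have h5 : (star T * T) i j = (1 : Matrix A A ℂ) i j := by rw [hT']
    have h6 : (star (T.map (starRingEnd ℂ)) * T.map (starRingEnd ℂ)) i j
        = (starRingEnd ℂ) ((star T * T) i j) := by
      simp [Matrix.mul_apply, Matrix.conjTranspose_apply, Matrix.map_apply]
    rw [h6, h5]
    simp [Matrix.one_apply, apply_ite]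
  · funext k
    obtain ⟨i, j⟩ := k
    have h7 : (T * V₀) i j = V₁ i j := by rw [hTV]
    have h8 : ∑ x, (starRingEnd ℂ) (T i x) * φ₀ (x, j) = φ₁ (i, j) := by
      have := congrArg (starRingEnd ℂ) h7
      simpa [Matrix.mul_apply, Matrix.map_apply, hV₀, hV₁] using this
    calc ((kronId (T.map (starRingEnd ℂ))).mulVec φ₀) (i, j)
        = ∑ x, ∑ y, (starRingEnd ℂ) (T i x) * ((1 : Matrix B B ℂ) j y * φ₀ (x, y)) := by
          simp [Matrix.mulVec, dotProduct, kronId, Fintype.sum_prod_type,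
            Matrix.map_apply, mul_assoc]
    _ = ∑ x, (starRingEnd ℂ) (T i x) * φ₀ (x, j) := by
          apply Finset.sum_congr rfl
          intro x _
          simp [Matrix.one_apply]
    _ = φ₁ (i, j) := h8
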